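/- Under the hypotheses above, the derivative of the pseudo-inverse satisfies R'(s) = −R(s)P'(s) − P'(s)R(s) − R(s)H'(s)R(s), where P(s) = |φ(s)⟩⟨φ(s)|. -/

import Mathlib

open scoped InnerProductSpace

/-- The derivative of the pseudo-inverse satisfies
`R'(s) = -R(s)P'(s) - P'(s)R(s) - R(s)H'(s)R(s)`, where `P(s) = |φ(s)⟩⟨φ(s)|`. -/
theorem stmt_4 {n : ℕ}
    (H H' R R' P P' Q : ℝ → EuclideanSpace ℂ (Fin n) →L[ℂ] EuclideanSpace ℂ (Fin n))
    (φ : ℝ → EuclideanSpace ℂ (Fin n))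
    (hherm : ∀ s, IsSelfAdjoint (H s))
    (hRherm : ∀ s, IsSelfAdjoint (R s))
    (hHd : ∀ s, HasDerivAt H (H' s) s)
    (hRd : ∀ s, HasDerivAt R (R' s) s)
    (hPd : ∀ s, HasDerivAt P (P' s) s)
    (hunit : ∀ s, ‖φ s‖ = 1)
    (heig : ∀ s, H s (φ s) = 0)
    (hP : ∀ s, P s = (innerSL ℂ (φ s)).smulRight (φ s))
    (hQ : ∀ s, Q s = 1 - P s)
    (hHR : ∀ s, H s ∘L R s = Q s)
    (hQR : ∀ s, Q s ∘L R s = R s)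
    (hRQ : ∀ s, R s ∘L Q s = R s)
    (hPR : ∀ s, P s ∘L R s = 0) :
    ∀ s, R' s = -(R s ∘L P' s) - (P' s ∘L R s) - (R s ∘L H' s ∘L R s) := by
  intro s
  -- P is self-adjoint
  have hPsa : ∀ t, IsSelfAdjoint (P t) := by
    intro t
    rw [ContinuousLinearMap.isSelfAdjoint_iff_isSymmetric]
    intro x y
    simp [hP t, inner_smul_left, inner_smul_right]
    rw [mul_comm]
  -- R * H = Q (star of hHR)
  have hQsa : IsSelfAdjoint (Q s) := by
    rw [ContinuousLinearMap.isSelfAdjoint_iff_isSymmetric]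
    have hPsym := ContinuousLinearMap.isSelfAdjoint_iff_isSymmetric.mp (hPsa s)
    intro x y
    simp [hQ s, inner_sub_left, inner_sub_right]
    simpa using hPsym x y
  have hRH : R s * H s = Q s := by
    have h := congrArg star (hHR s)
    rwa [← ContinuousLinearMap.mul_def, star_mul, (hherm s), (hRherm s), hQsa] at h
  -- derivative of H * R = Q = 1 - P gives: H'R + HR' = -P'
  have e1 : H' s * R s + H s * R' s = -(P' s) := by
    have d1 : HasDerivAt (fun t => H t * R t) (H' s * R s + H s * R' s) s :=
      (hHd s).mul (hRd s)
    have d2 : HasDerivAt (fun t => H t * R t) (-(P' s)) s := by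
      have h : (fun t => H t * R t) = fun t => 1 - P t := by
        funext t; rw [ContinuousLinearMap.mul_def, hHR t, hQ t]
      rw [h]
      exact (hPd s).const_sub 1
    exact d1.unique d2
  -- derivative of P * R = 0 gives: P'R + PR' = 0
  have e2 : P' s * R s + P s * R' s = 0 := by
    have d1 : HasDerivAt (fun t => P t * R t) (P' s * R s + P s * R' s) s :=
      (hPd s).mul (hRd s)
    have d2 : HasDerivAt (fun t => P t * R t) 0 s := by
      have h : (fun t => P t * R t) = fun _ => (0 : EuclideanSpace ℂ (Fin n) →L[ℂ] EuclideanSpace ℂ (Fin n)) := by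
        funext t; rw [ContinuousLinearMap.mul_def, hPR t]
      rw [h]; exact hasDerivAt_const s 0
    exact d1.unique d2
  -- P R' = -(P' R)
  have e3 : P s * R' s = -(P' s * R s) := eq_neg_of_add_eq_zero_right e2
  -- Q R' = -(R P') - R (H' R)
  have e4 : Q s * R' s = -(R s * P' s) - R s * (H' s * R s) := by
    have h5 : R s * (H' s * R s + H s * R' s) = R s * (-(P' s)) := by rw [e1]
    rw [mul_add, ← mul_assoc (R s) (H s) (R' s), hRH, mul_neg (R s) (P' s)] at h5
    exact eq_sub_of_add_eq' h5
  have hsplit : R' s = P s * R' s + Q s * R' s := by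
    rw [hQ s, sub_mul, one_mul]; abel
  show R' s = -(R s * P' s) - P' s * R s - R s * (H' s * R s)
  rw [hsplit, e3, e4]; abel
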